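/- (Gordan's Lemma) If σ ⊆ ℝ^n is a rational polyhedral cone, then the monoid σ ∩ ℤ^n is finitely generated. -/
import Mathlib

open Finset

/-- The real points of a lattice vector. -/
def toReal {n : ℕ} (l : Fin n → ℤ) : Fin n → ℝ := fun i => (l i : ℝ)

/-- `σ` is a rational polyhedral cone: the set of nonnegative real combinations of
finitely many lattice vectors. -/
def IsRatPolyhedralCone {n : ℕ} (σ : Set (Fin n → ℝ)) : Prop :=
  ∃ (m : ℕ) (v : Fin m → Fin n → ℤ),
    σ = {x | ∃ c : Fin m → ℝ, (∀ i, 0 ≤ c i) ∧ x = ∑ i, c i • toReal (v i)}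

lemma sum_ite_smul_aux {n m : ℕ} (g : Fin m → Fin n → ℤ) (hg : Function.Injective g)
    (x : Fin n → ℤ) (i0 : Fin m) (hx : x = g i0) (k : ℕ) :
    ∑ i, (if x = g i then k else 0) • g i = k • x := by
  subst hx
  rw [Finset.sum_eq_single i0]
  · simp
  · intro b _ hb
    rw [if_neg (fun h => hb (hg h.symm))]
    simp
  · simp

theorem gordan_lemma
    {n : ℕ} (σ : Set (Fin n → ℝ)) (hσ : IsRatPolyhedralCone σ) :
    ∃ (m : ℕ) (g : Fin m → Fin n → ℤ),
      (∀ i, toReal (g i) ∈ σ) ∧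
      ∀ l : Fin n → ℤ, toReal l ∈ σ → ∃ a : Fin m → ℕ, l = ∑ i, a i • g i := by
  obtain ⟨m, v, hσ⟩ := hσ
  -- lattice points of the fundamental parallelepiped
  set S : Set (Fin n → ℤ) :=
    {l | ∃ t : Fin m → ℝ, (∀ j, 0 ≤ t j ∧ t j ≤ 1) ∧ toReal l = ∑ j, t j • toReal (v j)}
    with hSdef
  have hSfin : S.Finite := by
    apply Set.Finite.subset
      (Set.Finite.pi (fun i : Fin n => Set.finite_Icc (-(∑ j, |v j i|)) (∑ j, |v j i|)))
    intro l hl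
    obtain ⟨t, ht, hlt⟩ := hl
    intro i _
    have h1 : ((l i : ℝ)) = ∑ j, t j * (v j i : ℝ) := by
      have := congrFun hlt i
      simpa [toReal, Finset.sum_apply] using this
    have h2 : |(l i : ℝ)| ≤ ((∑ j, |v j i| : ℤ) : ℝ) := by
      rw [h1]
      push_cast
      calc |∑ j, t j * (v j i : ℝ)| ≤ ∑ j, |t j * (v j i : ℝ)| :=
            Finset.abs_sum_le_sum_abs _ _
        _ ≤ ∑ j, |(v j i : ℝ)| := by
            apply Finset.sum_le_sum
            intro j _
            rw [abs_mul]
            have h3 : |t j| ≤ 1 := abs_le.mpr ⟨by linarith [(ht j).1], (ht j).2⟩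
            nlinarith [abs_nonneg ((v j i : ℝ))]
    have h4 : |l i| ≤ ∑ j, |v j i| := by exact_mod_cast h2
    exact Set.mem_Icc.mpr (abs_le.mp h4)
  classical
  set s : Finset (Fin n → ℤ) := hSfin.toFinset with hsdef
  set g : Fin s.card → Fin n → ℤ := fun i => (s.equivFin.symm i : Fin n → ℤ) with hgdef
  have hginj : Function.Injective g := by
    intro a b hab
    have : (s.equivFin.symm a : Fin n → ℤ) = (s.equivFin.symm b : Fin n → ℤ) := hab
    have := Subtype.ext this
    exact s.equivFin.symm.injective this
  have hgS : ∀ i, g i ∈ S := by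
    intro i
    have := (s.equivFin.symm i).2
    exact hSfin.mem_toFinset.mp this
  have hmemS : ∀ x ∈ S, ∃ i, x = g i := by
    intro x hx
    refine ⟨s.equivFin ⟨x, hSfin.mem_toFinset.mpr hx⟩, ?_⟩
    simp [hgdef]
  refine ⟨s.card, g, ?_, ?_⟩
  · intro i
    obtain ⟨t, ht, hlt⟩ := hgS i
    rw [hσ]
    exact ⟨t, fun j => (ht j).1, hlt⟩
  · intro l hl
    rw [hσ] at hl
    obtain ⟨c, hc, hlc⟩ := hl
    set b : Fin m → ℕ := fun j => (⌊c j⌋).toNat with hbdef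
    have hb : ∀ j, (b j : ℤ) = ⌊c j⌋ := fun j =>
      Int.toNat_of_nonneg (Int.floor_nonneg.mpr (hc j))
    set r : Fin n → ℤ := l - ∑ j, ⌊c j⌋ • v j with hrdef
    have hrS : r ∈ S := by
      refine ⟨fun j => Int.fract (c j), fun j =>
        ⟨Int.fract_nonneg _, (Int.fract_lt_one _).le⟩, ?_⟩
      funext i
      have h1 : ((l i : ℝ)) = ∑ j, c j * (v j i : ℝ) := by
        have := congrFun hlc i
        simpa [toReal, Finset.sum_apply] using this
      simp only [toReal, hrdef, Pi.sub_apply, Finset.sum_apply, Pi.smul_apply,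
        smul_eq_mul, Int.fract]
      push_cast
      rw [h1, ← Finset.sum_sub_distrib]
      congr 1
      funext j
      ring
    -- l = ∑ j, b j • v j + r
    have hl2 : l = (∑ j, b j • v j) + r := by
      rw [hrdef]
      have : ∀ j, (b j) • v j = ⌊c j⌋ • v j := by
        intro j
        rw [← hb j]
        exact (natCast_zsmul (v j) (b j)).symm
      rw [Finset.sum_congr rfl (fun j _ => this j)]
      abel
    -- each v j is in S
    have hvS : ∀ j, v j ∈ S := by
      intro j
      refine ⟨fun k => if k = j then 1 else 0, ?_, ?_⟩
      · intro k
        by_cases h : k = j <;> simp [h]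
      · funext i
        simp [toReal, Finset.sum_apply, ite_mul, apply_ite (fun f : Fin n → ℝ => f i), Finset.sum_ite_eq']
    obtain ⟨ir, hir⟩ := hmemS r hrS
    choose iv hiv using fun j => hmemS (v j) (hvS j)
    refine ⟨fun i => (∑ j, if v j = g i then b j else 0) + (if r = g i then 1 else 0), ?_⟩
    have key : ∑ i, ((∑ j, if v j = g i then b j else 0) + (if r = g i then 1 else 0)) • g i
        = (∑ j, b j • v j) + r := by
      have e1 : ∀ i : Fin s.card,
          ((∑ j, if v j = g i then b j else 0) + (if r = g i then 1 else 0)) • g i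
          = (∑ j, (if v j = g i then b j else 0) • g i) + (if r = g i then (1:ℕ) else 0) • g i := by
        intro i
        rw [add_smul, Finset.sum_smul]
      rw [Finset.sum_congr rfl (fun i _ => e1 i), Finset.sum_add_distrib]
      congr 1
      · rw [Finset.sum_comm]
        refine Finset.sum_congr rfl (fun j _ => ?_)
        exact sum_ite_smul_aux g hginj (v j) (iv j) (hiv j) (b j)
      · have := sum_ite_smul_aux g hginj r ir hir 1
        simpa using this
    rw [key, ← hl2]
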